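/- Let S_0 = {y ∈ F_q^d : ‖y‖ = 0} with d = 4k+2 for some k ∈ ℕ, k ≥ 1, and q ≡ 3 mod 4. Then for every α ∈ F_q^d, (1_{S_0})^∨(α) := q^{−d} Σ_{y ∈ S_0} χ(α·y) = q^{−1} δ_0(α) − q^{−(d+2)/2} Σ_{r ∈ F_q^*} χ(r‖α‖), where δ_0(α) = 1 if α = 0 and 0 otherwise. -/

import Mathlib

open Finset

section Aux

variable {F : Type} [Field F] [Fintype F] [DecidableEq F]

/-- An additive character maps sums to products. -/
lemma addChar_map_sum {ι : Type*} (ψ : AddChar F ℂ) (s : Finset ι) (f : ι → F) :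
    ψ (∑ i ∈ s, f i) = ∏ i ∈ s, ψ (f i) := by
  classical
  induction s using Finset.cons_induction with
  | empty => simp
  | cons a s ha ih => rw [Finset.sum_cons, Finset.prod_cons, AddChar.map_add_eq_mul, ih]

/-- Counting lemma: sum over `t` of `f (t^2)` in terms of the quadratic character. -/
lemma sum_sq_eq (hF : ringChar F ≠ 2) (f : F → ℂ) :
    ∑ t : F, f (t ^ 2) = ∑ x : F, ((quadraticChar F x : ℂ) + 1) * f x := by
  have h1 : ∀ t : F, f (t ^ 2) = ∑ x : F, if x = t ^ 2 then f x else 0 := by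
    intro t
    simp
  simp_rw [h1]
  rw [Finset.sum_comm]
  refine Finset.sum_congr rfl fun x _ => ?_
  have h2 : ∀ t : F, (if x = t ^ 2 then f x else 0) = (if t ^ 2 = x then f x else 0) := by
    intro t; simp [eq_comm]
  simp_rw [h2]
  rw [← Finset.sum_filter, Finset.sum_const, nsmul_eq_mul]
  have h3 := quadraticChar_card_sqrts hF x
  have h4 : ({y : F | y ^ 2 = x}).toFinset = Finset.univ.filter (fun t => t ^ 2 = x) := by
    ext t; simp
  rw [h4] at h3
  have h5 : ((Finset.univ.filter (fun t : F => t ^ 2 = x)).card : ℂ)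
      = (quadraticChar F x : ℂ) + 1 := by
    have := congrArg (fun n : ℤ => (n : ℂ)) h3
    push_cast at this ⊢
    exact_mod_cast this
  rw [h5]

end Aux

section Aux2

variable {F : Type} [Field F] [Fintype F] [DecidableEq F]

/-- The complex-valued quadratic character. -/
noncomputable def ηc (F : Type) [Field F] [Fintype F] [DecidableEq F] : MulChar F ℂ :=
  (quadraticChar F).ringHomComp (Int.castRingHom ℂ)

lemma ηc_ne_one (hF : ringChar F ≠ 2) : ηc F ≠ 1 := by
  rw [ηc]
  exact fun h => quadraticChar_ne_one hF
    ((MulChar.ringHomComp_eq_one_iff (Int.cast_injective (α := ℂ))).mp h)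

lemma ηc_isQuadratic : (ηc F).IsQuadratic :=
  (quadraticChar_isQuadratic F).comp _

lemma ηc_mul_self {b : F} (hb : b ≠ 0) : ηc F b * ηc F b = 1 := by
  have h := (ηc_isQuadratic (F := F)).sq_eq_one
  have := congrArg (fun χ : MulChar F ℂ => χ b) h
  simp only [pow_two, MulChar.mul_apply] at this
  rw [this]
  have hbu := (isUnit_iff_ne_zero.mpr hb)
  rw [← hbu.unit_spec, MulChar.one_apply_coe]

lemma ηc_neg_one (hq : Fintype.card F % 4 = 3) : ηc F (-1) = -1 := by
  have hF : ringChar F ≠ 2 := by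
    intro h
    have := FiniteField.even_card_of_char_two h
    omega
  have h := quadraticChar_neg_one hF
  have h4 : ZMod.χ₄ (Fintype.card F) = -1 := ZMod.χ₄_nat_three_mod_four hq
  rw [h4] at h
  simp [ηc, MulChar.ringHomComp_apply, h]

/-- Sum of `χ (b * t^2)` in terms of the Gauss sum. -/
lemma sum_chi_sq (hF : ringChar F ≠ 2) (χ : AddChar F ℂ) (hχ : χ ≠ 1) {b : F} (hb : b ≠ 0) :
    ∑ t : F, χ (b * t ^ 2) = ηc F b * gaussSum (ηc F) χ := by
  rw [sum_sq_eq hF (fun x => χ (b * x))]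
  simp_rw [add_mul, one_mul]
  rw [Finset.sum_add_distrib]
  have h0 : ∑ x : F, χ (b * x) = 0 := by
    have := AddChar.sum_mulShift b (AddChar.IsPrimitive.of_ne_one hχ)
    simp_rw [mul_comm] at this
    rw [if_neg hb] at this
    simpa using this
  rw [h0, add_zero]
  -- ∑ x, η x * χ (b * x) = η b * G
  have hbu : IsUnit b := isUnit_iff_ne_zero.mpr hb
  have hg := gaussSum_mulShift (ηc F) χ hbu.unit
  have hms : gaussSum (ηc F) (AddChar.mulShift χ (hbu.unit : F)) =
      ∑ x : F, (ηc F x : ℂ) * χ (b * x) := by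
    simp [gaussSum, AddChar.mulShift_apply, IsUnit.unit_spec]
  have : (ηc F b) * ∑ x : F, (ηc F x : ℂ) * χ (b * x) = gaussSum (ηc F) χ := by
    rw [← hms]
    simpa [IsUnit.unit_spec] using hg
  calc ∑ x : F, (quadraticChar F x : ℂ) * χ (b * x)
      = ∑ x : F, (ηc F x : ℂ) * χ (b * x) := by simp [ηc, MulChar.ringHomComp_apply]
    _ = (ηc F b * ηc F b) * ∑ x : F, (ηc F x : ℂ) * χ (b * x) := by rw [ηc_mul_self hb, one_mul]
    _ = ηc F b * gaussSum (ηc F) χ := by rw [mul_assoc, this]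

/-- The square of the quadratic Gauss sum is `-q` when `q ≡ 3 mod 4`. -/
lemma gaussSum_sq_eq (hq : Fintype.card F % 4 = 3) (χ : AddChar F ℂ) (hχ : χ ≠ 1) :
    gaussSum (ηc F) χ ^ 2 = -(Fintype.card F : ℂ) := by
  have hF : ringChar F ≠ 2 := by
    intro h
    have := FiniteField.even_card_of_char_two h
    omega
  rw [gaussSum_sq (ηc_ne_one hF) ηc_isQuadratic (AddChar.IsPrimitive.of_ne_one hχ),
    ηc_neg_one hq]
  ring

end Aux2

section Aux3

variable {F : Type} [Field F] [Fintype F] [DecidableEq F]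

lemma complete_square (hF : ringChar F ≠ 2) (χ : AddChar F ℂ) (hχ : χ ≠ 1)
    {r : F} (hr : r ≠ 0) (c : F) :
    ∑ t : F, χ (r * (t * t) + c * t) =
      χ (-(c * c) * (4 * r)⁻¹) * (ηc F r * gaussSum (ηc F) χ) := by
  have h2 : (2 : F) ≠ 0 := Ring.two_ne_zero hF
  have h4 : (4 : F) ≠ 0 := by
    have : (4 : F) = 2 * 2 := by norm_num
    rw [this]; exact mul_ne_zero h2 h2
  have h2r : (2 : F) * r ≠ 0 := mul_ne_zero h2 hr
  have h4r : (4 : F) * r ≠ 0 := mul_ne_zero h4 hr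
  have key : ∀ s : F,
      r * ((s - c * (2 * r)⁻¹) * (s - c * (2 * r)⁻¹)) + c * (s - c * (2 * r)⁻¹) =
        r * s ^ 2 + -(c * c) * (4 * r)⁻¹ := by
    intro s
    field_simp [h2r, h4r]
    ring
  have hswap : ∑ t : F, χ (r * (t * t) + c * t) =
      ∑ s : F, χ (r * ((s - c * (2 * r)⁻¹) * (s - c * (2 * r)⁻¹)) + c * (s - c * (2 * r)⁻¹)) :=
    (Fintype.sum_equiv (Equiv.subRight (c * (2 * r)⁻¹))
      (fun s => χ (r * ((s - c * (2 * r)⁻¹) * (s - c * (2 * r)⁻¹)) + c * (s - c * (2 * r)⁻¹)))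
      (fun t => χ (r * (t * t) + c * t)) (fun s => rfl)).symm
  rw [hswap]
  simp_rw [key, AddChar.map_add_eq_mul]
  rw [← Finset.sum_mul, sum_chi_sq hF χ hχ hr]
  ring

lemma innerSumAux (hq : Fintype.card F % 4 = 3) (χ : AddChar F ℂ) (hχ : χ ≠ 1) (k : ℕ)
    {r : F} (hr : r ≠ 0) (α : Fin (4 * k + 2) → F) :
    ∑ y : Fin (4 * k + 2) → F, χ (r * ∑ i, y i * y i + ∑ i, α i * y i) =
      -((Fintype.card F : ℂ) ^ (2 * k + 1)) * χ (-(4 * r)⁻¹ * ∑ i, α i * α i) := by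
  have hF : ringChar F ≠ 2 := by
    intro h
    have := FiniteField.even_card_of_char_two h
    omega
  have hexp : ∀ y : Fin (4 * k + 2) → F,
      r * ∑ i, y i * y i + ∑ i, α i * y i = ∑ i, (r * (y i * y i) + α i * y i) := by
    intro y
    rw [Finset.mul_sum, ← Finset.sum_add_distrib]
  simp_rw [hexp, addChar_map_sum]
  rw [← Fintype.piFinset_univ, ← Finset.prod_univ_sum (fun _ : Fin (4 * k + 2) => (univ : Finset F))
    (fun i j => χ (r * (j * j) + α i * j))]
  have hfac : ∀ i : Fin (4 * k + 2), ∑ t : F, χ (r * (t * t) + α i * t) =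
      χ (-(α i * α i) * (4 * r)⁻¹) * (ηc F r * gaussSum (ηc F) χ) :=
    fun i => complete_square hF χ hχ hr (α i)
  simp_rw [hfac]
  rw [Finset.prod_mul_distrib, Finset.prod_const, Finset.card_univ, Fintype.card_fin]
  have hprod : ∏ i : Fin (4 * k + 2), χ (-(α i * α i) * (4 * r)⁻¹) =
      χ (-(4 * r)⁻¹ * ∑ i, α i * α i) := by
    rw [← addChar_map_sum]
    congr 1
    rw [Finset.mul_sum]
    exact Finset.sum_congr rfl fun i _ => by ring
  rw [hprod]
  have hpow : (ηc F r * gaussSum (ηc F) χ) ^ (4 * k + 2) =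
      -((Fintype.card F : ℂ) ^ (2 * k + 1)) := by
    have h1 : (4 * k + 2) = 2 * (2 * k + 1) := by ring
    rw [h1, pow_mul, mul_pow, pow_two, ηc_mul_self hr, one_mul, gaussSum_sq_eq hq χ hχ,
      Odd.neg_pow ⟨k, by ring⟩]
  rw [hpow]
  ring

end Aux3

theorem inv_fourier_zero_sphere
    (F : Type) [Field F] [Fintype F] [DecidableEq F]
    (hq : Fintype.card F % 4 = 3)
    (χ : AddChar F ℂ) (hχ : χ ≠ 1) (k : ℕ) (hk : 1 ≤ k)
    (α : Fin (4 * k + 2) → F) :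
    ((Fintype.card F : ℂ) ^ (4 * k + 2))⁻¹ *
        ∑ y ∈ Finset.univ.filter (fun y : Fin (4 * k + 2) → F => ∑ i, y i * y i = 0),
          χ (∑ i, α i * y i) =
      (if α = 0 then ((Fintype.card F : ℂ))⁻¹ else 0) -
        ((Fintype.card F : ℂ) ^ (2 * k + 2))⁻¹ *
          ∑ r ∈ (Finset.univ : Finset F) \ {0}, χ (r * ∑ i, α i * α i) := by
  have hF : ringChar F ≠ 2 := by
    intro h
    have := FiniteField.even_card_of_char_two h
    omega
  have hprim := AddChar.IsPrimitive.of_ne_one hχ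
  have hq0 : (Fintype.card F : ℂ) ≠ 0 := Nat.cast_ne_zero.mpr Fintype.card_ne_zero
  have h2 : (2 : F) ≠ 0 := Ring.two_ne_zero hF
  have h4 : (4 : F) ≠ 0 := by
    have : (4 : F) = 2 * 2 := by norm_num
    rw [this]; exact mul_ne_zero h2 h2
  -- Claim 1: q * (sum over the sphere) equals the double sum.
  have claim1 : (Fintype.card F : ℂ) *
      ∑ y ∈ Finset.univ.filter (fun y : Fin (4 * k + 2) → F => ∑ i, y i * y i = 0),
        χ (∑ i, α i * y i)
      = ∑ r : F, ∑ y : Fin (4 * k + 2) → F, χ (r * ∑ i, y i * y i + ∑ i, α i * y i) := by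
    rw [Finset.sum_comm]
    have hy : ∀ y : Fin (4 * k + 2) → F,
        ∑ r : F, χ (r * ∑ i, y i * y i + ∑ i, α i * y i)
          = (if (∑ i, y i * y i) = 0 then (Fintype.card F : ℂ) else 0) *
              χ (∑ i, α i * y i) := by
      intro y
      simp_rw [AddChar.map_add_eq_mul]
      rw [← Finset.sum_mul, AddChar.sum_mulShift _ hprim]
      split <;> simp
    simp_rw [hy, ite_mul, zero_mul]
    rw [← Finset.sum_filter, ← Finset.mul_sum]
  -- r = 0 term
  have hzero : ∑ y : Fin (4 * k + 2) → F, χ ((0:F) * ∑ i, y i * y i + ∑ i, α i * y i)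
      = if α = 0 then (Fintype.card F : ℂ) ^ (4 * k + 2) else 0 := by
    have he : ∀ y : Fin (4 * k + 2) → F,
        (0:F) * ∑ i, y i * y i + ∑ i, α i * y i = ∑ i, α i * y i := fun y => by
      rw [zero_mul, zero_add]
    simp_rw [he, addChar_map_sum]
    rw [← Fintype.piFinset_univ,
      ← Finset.prod_univ_sum (fun _ : Fin (4 * k + 2) => (univ : Finset F))
        (fun i j => χ (α i * j))]
    have hfac : ∀ i : Fin (4 * k + 2),
        ∑ t : F, χ (α i * t) = if α i = 0 then (Fintype.card F : ℂ) else 0 := by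
      intro i
      simp_rw [mul_comm (α i)]
      have := AddChar.sum_mulShift (α i) hprim
      rw [this]
      split <;> simp
    simp_rw [hfac]
    by_cases hα : α = 0
    · rw [if_pos hα]
      subst hα
      simp [Finset.prod_const]
    · rw [if_neg hα]
      obtain ⟨i, hi⟩ := Function.ne_iff.mp hα
      exact Finset.prod_eq_zero (Finset.mem_univ i) (if_neg hi)
  -- r ≠ 0 terms
  have hrest : ∑ r ∈ (Finset.univ : Finset F) \ {0},
        ∑ y : Fin (4 * k + 2) → F, χ (r * ∑ i, y i * y i + ∑ i, α i * y i)
      = -((Fintype.card F : ℂ) ^ (2 * k + 1)) *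
          ∑ r ∈ (Finset.univ : Finset F) \ {0}, χ (r * ∑ i, α i * α i) := by
    have step1 : ∀ r ∈ (Finset.univ : Finset F) \ {0},
        ∑ y : Fin (4 * k + 2) → F, χ (r * ∑ i, y i * y i + ∑ i, α i * y i)
          = -((Fintype.card F : ℂ) ^ (2 * k + 1)) * χ (-(4 * r)⁻¹ * ∑ i, α i * α i) := by
      intro r hr
      rw [Finset.mem_sdiff, Finset.mem_singleton] at hr
      exact innerSumAux hq χ hχ k hr.2 α
    rw [Finset.sum_congr rfl step1, ← Finset.mul_sum]
    congr 1
    refine Finset.sum_nbij' (fun r => -(4 * r)⁻¹) (fun r => -(4 * r)⁻¹) ?_ ?_ ?_ ?_ ?_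
    · intro a ha
      rw [Finset.mem_sdiff, Finset.mem_singleton] at ha ⊢
      refine ⟨Finset.mem_univ _, ?_⟩
      have : (4 : F) * a ≠ 0 := mul_ne_zero h4 ha.2
      simp only [ne_eq, neg_eq_zero, inv_eq_zero, mul_eq_zero, not_or]
      exact ⟨h4, ha.2⟩
    · intro a ha
      rw [Finset.mem_sdiff, Finset.mem_singleton] at ha ⊢
      refine ⟨Finset.mem_univ _, ?_⟩
      have : (4 : F) * a ≠ 0 := mul_ne_zero h4 ha.2
      simp only [ne_eq, neg_eq_zero, inv_eq_zero, mul_eq_zero, not_or]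
      exact ⟨h4, ha.2⟩
    · intro a ha
      rw [Finset.mem_sdiff, Finset.mem_singleton] at ha
      have ha2 := ha.2
      field_simp
    · intro a ha
      rw [Finset.mem_sdiff, Finset.mem_singleton] at ha
      have ha2 := ha.2
      field_simp
    · intro a ha
      rfl
  -- Put everything together
  have claim2 := claim1
  rw [Finset.sum_eq_sum_sdiff_singleton_add (Finset.mem_univ (0 : F)), hzero, hrest] at claim2
  have hT : ∑ y ∈ Finset.univ.filter (fun y : Fin (4 * k + 2) → F => ∑ i, y i * y i = 0),
      χ (∑ i, α i * y i)
      = (Fintype.card F : ℂ)⁻¹ *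
          (-((Fintype.card F : ℂ) ^ (2 * k + 1)) *
              ∑ r ∈ (Finset.univ : Finset F) \ {0}, χ (r * ∑ i, α i * α i)
            + if α = 0 then (Fintype.card F : ℂ) ^ (4 * k + 2) else 0) := by
    rw [eq_inv_mul_iff_mul_eq₀ hq0]
    exact claim2
  rw [hT]
  generalize (∑ r ∈ (Finset.univ : Finset F) \ {0}, χ (r * ∑ i, α i * α i)) = S
  by_cases hα : α = 0
  · rw [if_pos hα, if_pos hα]
    field_simp
    ring
  · rw [if_neg hα, if_neg hα]
    field_simp
    ring
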